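/- Let a = (a1, a2) be a unit vector in R^2 with a1 > a2 > 0 and let t satisfy a1 - a2 ≤ t ≤ a1 + a2. Then the length of the slice {x ∈ [-1/2,1/2]^2 : a1*x1 + a2*x2 = t/2} equals (a1 + a2 - t)/(2*a1*a2). -/

import Mathlib

set_option maxHeartbeats 1000000


open MeasureTheory

theorem slice_square_chamber2_volume
    (a1 a2 t : ℝ) (hunit : a1 ^ 2 + a2 ^ 2 = 1) (h12 : a1 > a2) (h2 : a2 > 0)
    (ht0 : a1 - a2 ≤ t) (ht1 : t ≤ a1 + a2) :
    μH[1] {x : EuclideanSpace ℝ (Fin 2) |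
        (∀ i, |x i| ≤ 1 / 2) ∧ a1 * x 0 + a2 * x 1 = t / 2}
      = ENNReal.ofReal ((a1 + a2 - t) / (2 * a1 * a2)) := by
  have ha1 : (0:ℝ) < a1 := lt_trans h2 h12
  set P : EuclideanSpace ℝ (Fin 2) := !₂[(t - a2)/(2*a1), 1/2] with hP
  set Q : EuclideanSpace ℝ (Fin 2) := !₂[1/2, (t - a1)/(2*a2)] with hQ
  have hP0 : P 0 = (t - a2)/(2*a1) := rfl
  have hP1 : P 1 = 1/2 := rfl
  have hQ0 : Q 0 = 1/2 := rfl
  have hQ1 : Q 1 = (t - a1)/(2*a2) := rfl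
  have hset : {x : EuclideanSpace ℝ (Fin 2) |
      (∀ i, |x i| ≤ 1 / 2) ∧ a1 * x 0 + a2 * x 1 = t / 2} = segment ℝ P Q := by
    ext x
    simp only [Set.mem_setOf_eq, segment, Set.mem_setOf_eq]
    constructor
    · rintro ⟨hb, he⟩
      have hb0 := hb 0
      have hb1 := hb 1
      rw [abs_le] at hb0 hb1
      rcases eq_or_lt_of_le ht1 with hdeg | hlt
      · -- t = a1 + a2 : single point
        have hx0 : x 0 = 1/2 := by nlinarith [hb0.1, hb0.2, hb1.1, hb1.2]
        have hx1 : x 1 = 1/2 := by nlinarith [hb0.1, hb0.2, hb1.1, hb1.2]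
        refine ⟨1, 0, zero_le_one, le_refl 0, by ring, ?_⟩
        have : x = P := by
          ext i
          fin_cases i
          · show x 0 = P 0
            rw [hP0, hx0]; field_simp; linarith
          · show x 1 = P 1
            rw [hP1, hx1]
        rw [this]
        simp
      · have hD : a1 + a2 - t > 0 := by linarith
        set θ : ℝ := (2*a1*(x 0) - (t - a2))/(a1 + a2 - t) with hθ
        have hx0ge : (t - a2) ≤ 2*a1*(x 0) := by nlinarith [hb1.2]
        have hθ0 : 0 ≤ θ := div_nonneg (by linarith) (le_of_lt hD)
        have hθ1 : θ ≤ 1 := by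
          rw [div_le_one hD]; nlinarith [hb0.2]
        refine ⟨1 - θ, θ, by linarith, hθ0, by ring, ?_⟩
        ext i
        fin_cases i
        · show (1-θ) * P 0 + θ * Q 0 = x 0
          rw [hP0, hQ0, hθ]
          field_simp
          ring
        · show (1-θ) * P 1 + θ * Q 1 = x 1
          rw [hP1, hQ1, hθ]
          have hx1 : x 1 = (t - 2*a1*(x 0))/(2*a2) := by
            field_simp; linarith
          rw [hx1]
          field_simp
          ring
    · rintro ⟨u, v, hu, hv, huv, rfl⟩
      have hc0 : -(1/2) ≤ (t - a2)/(2*a1) ∧ (t - a2)/(2*a1) ≤ 1/2 := by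
        constructor
        · rw [le_div_iff₀ (by positivity)]; nlinarith
        · rw [div_le_iff₀ (by positivity)]; nlinarith
      have hc1 : -(1/2) ≤ (t - a1)/(2*a2) ∧ (t - a1)/(2*a2) ≤ 1/2 := by
        constructor
        · rw [le_div_iff₀ (by positivity)]; nlinarith
        · rw [div_le_iff₀ (by positivity)]; nlinarith
      have e0 : (u • P + v • Q) 0 = u * ((t - a2)/(2*a1)) + v * (1/2) := rfl
      have e1 : (u • P + v • Q) 1 = u * (1/2) + v * ((t - a1)/(2*a2)) := rfl
      have habs0 : |(u • P + v • Q) 0| ≤ 1/2 := by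
        rw [e0, abs_le]
        constructor
        · nlinarith [mul_le_mul_of_nonneg_left hc0.1 hu]
        · nlinarith [mul_le_mul_of_nonneg_left hc0.2 hu]
      have habs1 : |(u • P + v • Q) 1| ≤ 1/2 := by
        rw [e1, abs_le]
        constructor
        · nlinarith [mul_le_mul_of_nonneg_left hc1.1 hv]
        · nlinarith [mul_le_mul_of_nonneg_left hc1.2 hv]
      constructor
      · intro i
        fin_cases i
        · exact habs0
        · exact habs1
      · rw [e0, e1]
        have hv2 : v = 1 - u := by linarith
        subst hv2
        field_simp
        ring
  rw [hset, hausdorffMeasure_segment, edist_dist]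
  congr 1
  have hdist : dist P Q = Real.sqrt (((a1 + a2 - t)/(2*a1*a2))^2) := by
    rw [EuclideanSpace.dist_eq]
    congr 1
    rw [Fin.sum_univ_two, hP0, hP1, hQ0, hQ1, Real.dist_eq, Real.dist_eq, sq_abs, sq_abs]
    field_simp
    linear_combination ((a1+a2-t)^2) * hunit
  rw [hdist, Real.sqrt_sq (div_nonneg (by linarith) (by positivity))]
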